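/- arXiv:2605.03230 — 4 statements merged into one kernel-verified Lean document; each statement's English description precedes it below -/
import Mathlib

section
/- Under the SILMARILS signature equations with b ≠ 0, d ≠ 0, ε ≠ 0, the verification values satisfy V₀ = d·w₀·C and V₁ = d·w₁·C, where C = −a_K + r·a_ε·ε⁻¹. In particular (V₀, V₁) are the evaluations at w₀ and w₁ of the linear polynomial f(x) = d·C·x. -/
/-- **Structure of the verification values.**
Under the SILMARILS signature equations with `b ≠ 0`, `d ≠ 0`, `ε ≠ 0`, the
verification values satisfy `V₀ = d·w₀·C` and `V₁ = d·w₁·C`, where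
`C = −a_K + r·a_ε·ε⁻¹`; i.e. `(V₀, V₁)` are the evaluations at `w₀` and `w₁`
of the linear polynomial `f(x) = d·C·x`. -/
theorem silmarils_verification_values
    (p : ℕ) [Fact p.Prime] (w₀ w₁ : ZMod p) (hw : w₀ ≠ w₁)
    (K' r aK aε b d ε : ZMod p) (hb : b ≠ 0) (hd : d ≠ 0) (hε : ε ≠ 0)
    -- Shamir shares
    (K₀' K₁' ε₀ ε₁ : ZMod p)
    (hK₀' : K₀' = K' + aK * w₀) (hK₁' : K₁' = K' + aK * w₁)
    (hε₀ : ε₀ = ε + aε * w₀) (hε₁ : ε₁ = ε + aε * w₁)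
    -- signature components
    (σ₁ σ₂ σ₃ σ₄ σ₅ : ZMod p)
    (hσ₁ : σ₁ = b * (K' - r)) (hσ₂ : σ₂ = d * b⁻¹)
    (hσ₃ : σ₃ = K₁' * d) (hσ₄ : σ₄ = d * ε⁻¹ * ε₁)
    (hσ₅ : σ₅ = d * (K₀' - r * ε⁻¹ * ε₀))
    -- verification values
    (V₀ V₁ C : ZMod p)
    (hV₀ : V₀ = σ₁ * σ₂ - σ₅) (hV₁ : V₁ = σ₁ * σ₂ - σ₃ + r * σ₄)
    (hC : C = -aK + r * aε * ε⁻¹) :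
    V₀ = d * w₀ * C ∧ V₁ = d * w₁ * C := by
  subst hK₀' hK₁' hε₀ hε₁ hσ₁ hσ₂ hσ₃ hσ₄ hσ₅ hV₀ hV₁ hC
  constructor <;> field_simp <;> ring
end

section
/- For every choice of parameters K', r, a_K, a_ε ∈ 𝔽_p and b, d, ε ∈ 𝔽_p with b ≠ 0, d ≠ 0, ε ≠ 0 (covering both honestly generated signatures and signatures simulated by the designated verifier with arbitrary K'*, a_K, a_ε), the SILMARILS signature components satisfy the verification identity V = (w₀·V₁ − w₁·V₀)/(w₀ − w₁) = 0. -/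
/-- **Verification identity / correctness and DV simulatability.**
For every choice of parameters `K', r, a_K, a_ε ∈ 𝔽_p` and nonzero `b, d, ε`
(covering both honest signatures and signatures simulated by the designated
verifier), the SILMARILS signature components satisfy
`V = (w₀·V₁ − w₁·V₀)/(w₀ − w₁) = 0`. -/
theorem silmarils_verification_identity
    (p : ℕ) [Fact p.Prime] (w₀ w₁ : ZMod p) (hw : w₀ ≠ w₁)
    (K' r aK aε b d ε : ZMod p) (hb : b ≠ 0) (hd : d ≠ 0) (hε : ε ≠ 0)
    (K₀' K₁' ε₀ ε₁ : ZMod p)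
    (hK₀' : K₀' = K' + aK * w₀) (hK₁' : K₁' = K' + aK * w₁)
    (hε₀ : ε₀ = ε + aε * w₀) (hε₁ : ε₁ = ε + aε * w₁)
    (σ₁ σ₂ σ₃ σ₄ σ₅ : ZMod p)
    (hσ₁ : σ₁ = b * (K' - r)) (hσ₂ : σ₂ = d * b⁻¹)
    (hσ₃ : σ₃ = K₁' * d) (hσ₄ : σ₄ = d * ε⁻¹ * ε₁)
    (hσ₅ : σ₅ = d * (K₀' - r * ε⁻¹ * ε₀))
    (V₀ V₁ V : ZMod p)
    (hV₀ : V₀ = σ₁ * σ₂ - σ₅) (hV₁ : V₁ = σ₁ * σ₂ - σ₃ + r * σ₄)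
    (hV : V = (w₀ * V₁ - w₁ * V₀) / (w₀ - w₁)) :
    V = 0 := by
  have hbi : b⁻¹ * b = 1 := ZMod.inv_mul_of_unit b hb.isUnit
  have hεi : ε⁻¹ * ε = 1 := ZMod.inv_mul_of_unit ε hε.isUnit
  subst hV hV₀ hV₁ hσ₁ hσ₂ hσ₃ hσ₄ hσ₅ hK₀' hK₁' hε₀ hε₁
  have : w₀ * (b * (K' - r) * (d * b⁻¹) - (K' + aK * w₁) * d +
      r * (d * ε⁻¹ * (ε + aε * w₁))) - w₁ * (b * (K' - r) * (d * b⁻¹) -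
      d * (K' + aK * w₀ - r * ε⁻¹ * (ε + aε * w₀))) = 0 := by
    field_simp
    ring_nf
  rw [this, zero_div]
end

section
/- Under the SILMARILS signature equations with b ≠ 0, d ≠ 0, ε ≠ 0, verification accepts the honestly generated signature (σ₁,…,σ₅) if and only if ε + a_ε·w₁ ≠ 0; equivalently, the only way an honest signature can be rejected is the event σ₄ = 0, which happens exactly when ε₁ = 0. -/
/-- **Acceptance of honest signatures characterized.**
Under the SILMARILS signature equations with `b ≠ 0`, `d ≠ 0`, `ε ≠ 0`,
verification accepts the honestly generated signature iff `ε + a_ε·w₁ ≠ 0`;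
equivalently, the only way an honest signature is rejected is the event
`σ₄ = 0`, occurring exactly when `ε₁ = 0`. -/
theorem silmarils_honest_accept_iff
    (p : ℕ) [Fact p.Prime] (w₀ w₁ : ZMod p) (hw : w₀ ≠ w₁)
    (K' r aK aε b d ε : ZMod p) (hb : b ≠ 0) (hd : d ≠ 0) (hε : ε ≠ 0)
    (K₀' K₁' ε₀ ε₁ : ZMod p)
    (hK₀' : K₀' = K' + aK * w₀) (hK₁' : K₁' = K' + aK * w₁)
    (hε₀ : ε₀ = ε + aε * w₀) (hε₁ : ε₁ = ε + aε * w₁)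
    (σ₁ σ₂ σ₃ σ₄ σ₅ : ZMod p)
    (hσ₁ : σ₁ = b * (K' - r)) (hσ₂ : σ₂ = d * b⁻¹)
    (hσ₃ : σ₃ = K₁' * d) (hσ₄ : σ₄ = d * ε⁻¹ * ε₁)
    (hσ₅ : σ₅ = d * (K₀' - r * ε⁻¹ * ε₀))
    (V₀ V₁ V : ZMod p)
    (hV₀ : V₀ = σ₁ * σ₂ - σ₅) (hV₁ : V₁ = σ₁ * σ₂ - σ₃ + r * σ₄)
    (hV : V = (w₀ * V₁ - w₁ * V₀) / (w₀ - w₁)) :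
    ((σ₄ ≠ 0 ∧ V = 0) ↔ ε + aε * w₁ ≠ 0) ∧ (σ₄ = 0 ↔ ε₁ = 0) := by
  subst hK₀' hK₁' hε₀ hε₁ hσ₁ hσ₂ hσ₃ hσ₄ hσ₅ hV₀ hV₁ hV
  have hwd : w₀ - w₁ ≠ 0 := sub_ne_zero.mpr hw
  have hσ4 : d * ε⁻¹ * (ε + aε * w₁) = 0 ↔ ε + aε * w₁ = 0 := by
    constructor
    · intro h
      rcases mul_eq_zero.mp h with h' | h'
      · rcases mul_eq_zero.mp h' with h'' | h''
        · exact absurd h'' hd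
        · exact absurd h'' (inv_ne_zero hε)
      · exact h'
    · intro h; rw [h, mul_zero]
  have hV0 : (w₀ * (b * (K' - r) * (d * b⁻¹) - (K' + aK * w₁) * d +
      r * (d * ε⁻¹ * (ε + aε * w₁))) -
      w₁ * (b * (K' - r) * (d * b⁻¹) -
      d * (K' + aK * w₀ - r * ε⁻¹ * (ε + aε * w₀)))) / (w₀ - w₁) = 0 := by
    field_simp
    ring
  constructor
  · constructor
    · intro ⟨h, _⟩
      exact fun he => h (hσ4.mpr he)
    · intro h
      exact ⟨fun hc => h (hσ4.mp hc), hV0⟩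
  · exact hσ4
end

section
/- (1/p-Correctness.) Fix a prime p, distinct weights w₀ ≠ w₁ in 𝔽_p with w₁ ≠ 0, and any K', r, a_K ∈ 𝔽_p and b, d, ε ∈ 𝔽_p with b ≠ 0, d ≠ 0, ε ≠ 0. If the slope a_ε is drawn uniformly at random from 𝔽_p and the SILMARILS signature is formed from these values, then the probability that verification rejects the honestly generated signature equals 1/p; in particular it is at most 1/p. -/
open scoped ENNReal

/-- **1/p-correctness.**
Fix a prime `p`, distinct weights `w₀ ≠ w₁` with `w₁ ≠ 0`, and any
`K', r, a_K ∈ 𝔽_p`, `b, d, ε ∈ 𝔽_p` with `b ≠ 0`, `d ≠ 0`, `ε ≠ 0`.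
If the slope `a_ε` is drawn uniformly from `𝔽_p` and the SILMARILS signature is
formed from these values, then the probability that verification rejects the
honestly generated signature equals `1/p` (in particular it is at most `1/p`). -/
theorem silmarils_correctness_error
    (p : ℕ) [Fact p.Prime] (w₀ w₁ : ZMod p) (hw : w₀ ≠ w₁) (hw₁ : w₁ ≠ 0)
    (K' r aK b d ε : ZMod p) (hb : b ≠ 0) (hd : d ≠ 0) (hε : ε ≠ 0)
    -- signature components as functions of the random slope `a_ε`
    (σ₁ σ₂ σ₃ : ZMod p) (σ₄ σ₅ V₀ V₁ V : ZMod p → ZMod p)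
    (hσ₁ : σ₁ = b * (K' - r)) (hσ₂ : σ₂ = d * b⁻¹)
    (hσ₃ : σ₃ = (K' + aK * w₁) * d)
    (hσ₄ : ∀ aε, σ₄ aε = d * ε⁻¹ * (ε + aε * w₁))
    (hσ₅ : ∀ aε, σ₅ aε = d * ((K' + aK * w₀) - r * ε⁻¹ * (ε + aε * w₀)))
    (hV₀ : ∀ aε, V₀ aε = σ₁ * σ₂ - σ₅ aε)
    (hV₁ : ∀ aε, V₁ aε = σ₁ * σ₂ - σ₃ + r * σ₄ aε)
    (hV : ∀ aε, V aε = (w₀ * V₁ aε - w₁ * V₀ aε) / (w₀ - w₁)) :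
    (PMF.uniformOfFintype (ZMod p)).toOuterMeasure
        {aε : ZMod p | ¬ (σ₄ aε ≠ 0 ∧ V aε = 0)} = (p : ℝ≥0∞)⁻¹ := by
  have hp : (p : ℕ).Prime := Fact.out
  have hVzero : ∀ aε, V aε = 0 := by
    intro aε
    rw [hV, hV₀ aε, hV₁ aε, hσ₁, hσ₂, hσ₃, hσ₄, hσ₅]
    have h1 : b * (K' - r) * (d * b⁻¹) = d * (K' - r) := by
      field_simp
    rw [h1]
    have h2 : w₀ * (d * (K' - r) - (K' + aK * w₁) * d +
        r * (d * ε⁻¹ * (ε + aε * w₁))) -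
        w₁ * (d * (K' - r) - d * (K' + aK * w₀ - r * ε⁻¹ * (ε + aε * w₀))) = 0 := by
      have hεi : ε⁻¹ * ε = 1 := inv_mul_cancel₀ hε
      linear_combination ((w₀ - w₁) * d * r) * hεi
    rw [h2, zero_div]
  have hset : {aε : ZMod p | ¬ (σ₄ aε ≠ 0 ∧ V aε = 0)} = {-ε * w₁⁻¹} := by
    ext aε
    simp only [Set.mem_setOf_eq, Set.mem_singleton_iff, not_and, not_not]
    constructor
    · intro h
      have h4 : σ₄ aε = 0 := by
        by_contra h4; exact (h h4) (hVzero aε)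
      rw [hσ₄] at h4
      have : ε + aε * w₁ = 0 := by
        rcases mul_eq_zero.mp h4 with h' | h'
        · exact absurd h' (mul_ne_zero hd (inv_ne_zero hε))
        · exact h'
      field_simp
      linear_combination this
    · intro h h4
      exfalso
      apply h4
      rw [hσ₄, h]
      have h0 : ε + -ε * w₁⁻¹ * w₁ = 0 := by field_simp; ring
      rw [h0, mul_zero]
  rw [hset, PMF.toOuterMeasure_apply_singleton, PMF.uniformOfFintype_apply,
    ZMod.card]
end
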